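/- arXiv:math/0412534 — 3 statements merged into one kernel-verified Lean document; each statement's English description precedes it below -/
import Mathlib

section
/- For every h > 0, the series defining the one-dimensional discrete heat kernel w^h_j(t) converges absolutely for every j ∈ ℤ and t ≥ 0, w^h_j(0) = 1/h if j = 0 and w^h_j(0) = 0 otherwise, and for every t > 0 and j ∈ ℤ, the function t ↦ w^h_j(t) is differentiable with d/dt w^h_j(t) = (w^h_{j+1}(t) − 2 w^h_j(t) + w^h_{j−1}(t))/h². -/
noncomputable section

/-- The `k`-th term of the series defining the one-dimensional discrete heat kernel. -/
def wterm (h : ℝ) (j : ℤ) (t : ℝ) (k : ℕ) : ℝ :=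
  if j ≤ (k : ℤ) then
    (t / h ^ 2) ^ (2 * (k : ℤ) - j).toNat /
      ((((k : ℤ) - j).toNat.factorial : ℝ) * (k.factorial : ℝ))
  else 0

/-- The one-dimensional discrete heat kernel
`w^h_j(t) = (1/h) e^{−2t/h²} ∑_{k ≥ max(j,0)} (t/h²)^{2k−j} / ((k−j)! k!)`. -/
def wker (h : ℝ) (j : ℤ) (t : ℝ) : ℝ :=
  (1 / h) * Real.exp (-2 * t / h ^ 2) * ∑' k : ℕ, wterm h j t k

lemma wterm_nonneg (h : ℝ) (j : ℤ) (t : ℝ) (k : ℕ) (ht : 0 ≤ t) (hh : 0 < h) :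
    0 ≤ wterm h j t k := by
  unfold wterm
  split
  · positivity
  · exact le_rfl

lemma wterm_mono (h : ℝ) (j : ℤ) (t t' : ℝ) (k : ℕ) (ht : 0 ≤ t) (htt : t ≤ t') (hh : 0 < h) :
    wterm h j t k ≤ wterm h j t' k := by
  unfold wterm
  split
  · gcongr
  · exact le_rfl

set_option maxHeartbeats 800000 in
lemma summable_abs_wterm (h : ℝ) (hh : 0 < h) (j : ℤ) (t : ℝ) (ht : 0 ≤ t) :
    Summable fun k : ℕ => |wterm h j t k| := by
  set M : ℝ := max (t / h ^ 2) 1 with hM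
  have hM1 : 1 ≤ M := le_max_right _ _
  have hx : t / h ^ 2 ≤ M := le_max_left _ _
  have hx0 : 0 ≤ t / h ^ 2 := by positivity
  refine Summable.of_nonneg_of_le (fun k => abs_nonneg _) (fun k => ?_)
    ((Real.summable_pow_div_factorial (M ^ 2)).mul_left (M ^ j.natAbs))
  ·
    rw [abs_of_nonneg (wterm_nonneg h j t k ht hh)]
    unfold wterm
    split
    · have h1 : (t / h ^ 2) ^ (2 * (k : ℤ) - j).toNat ≤ M ^ (2 * (k : ℤ) - j).toNat := by
        gcongr
      have h2 : M ^ (2 * (k : ℤ) - j).toNat ≤ M ^ (j.natAbs + 2 * k) := by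
        apply pow_le_pow_right₀ hM1
        omega
      have h3 : (1 : ℝ) ≤ (((k : ℤ) - j).toNat.factorial : ℝ) := by
        exact_mod_cast Nat.one_le_iff_ne_zero.2 (Nat.factorial_ne_zero _)
      calc (t / h ^ 2) ^ (2 * (k : ℤ) - j).toNat /
            ((((k : ℤ) - j).toNat.factorial : ℝ) * (k.factorial : ℝ))
          ≤ M ^ (j.natAbs + 2 * k) / (1 * (k.factorial : ℝ)) := by
            apply div_le_div₀ (by positivity) (h1.trans h2) (by positivity)
            have h4 : (1:ℝ) ≤ (k.factorial : ℝ) := by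
              exact_mod_cast Nat.one_le_iff_ne_zero.2 (Nat.factorial_ne_zero _)
            nlinarith
        _ = M ^ j.natAbs * ((M ^ 2) ^ k / (k.factorial : ℝ)) := by
            rw [pow_add, pow_mul]; ring
    · positivity

lemma wterm_zero (h : ℝ) (j : ℤ) (k : ℕ) :
    wterm h j 0 k = if j = 0 ∧ k = 0 then 1 else 0 := by
  unfold wterm
  rcases Classical.em (j = 0 ∧ k = 0) with ⟨hj, hk⟩ | hc
  · subst hj; subst hk; norm_num
  · rw [if_neg hc]
    split
    · rename_i hjk
      have hn : (2 * (k : ℤ) - j).toNat ≠ 0 := by omega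
      rw [zero_div, zero_pow hn, zero_div]
    · rfl

def dterm (h : ℝ) (j : ℤ) (t : ℝ) (k : ℕ) : ℝ :=
  (wterm h (j + 1) t k + (if k = 0 then 0 else wterm h (j - 1) t (k - 1))) / h ^ 2

lemma wterm_eval (h t : ℝ) (k a : ℕ) :
    wterm h ((k : ℤ) - a) t k = (t / h ^ 2) ^ (k + a) / ((a.factorial : ℝ) * k.factorial) := by
  unfold wterm
  rw [if_pos (show (k : ℤ) - a ≤ (k : ℤ) by omega)]
  have e1 : (2 * (k : ℤ) - ((k : ℤ) - a)).toNat = k + a := by omega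
  have e2 : ((k : ℤ) - ((k : ℤ) - a)).toNat = a := by omega
  rw [e1, e2]

lemma wterm_neg (h t : ℝ) (j : ℤ) (k : ℕ) (hjk : ¬ j ≤ (k : ℤ)) : wterm h j t k = 0 := by
  unfold wterm; rw [if_neg hjk]

set_option maxHeartbeats 1000000 in
lemma hasDerivAt_wterm (h : ℝ) (hh : 0 < h) (j : ℤ) (k : ℕ) (t : ℝ) :
    HasDerivAt (fun s => wterm h j s k) (dterm h j t k) t := by
  have hh2 : (h : ℝ) ^ 2 ≠ 0 := by positivity
  by_cases hjk : j ≤ (k : ℤ)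
  · obtain ⟨a, rfl⟩ : ∃ a : ℕ, j = (k : ℤ) - a := ⟨((k : ℤ) - j).toNat, by omega⟩
    have hderiv : HasDerivAt (fun s => wterm h ((k : ℤ) - a) s k)
        (((k + a : ℕ) : ℝ) * (t / h ^ 2) ^ (k + a - 1) * (1 / h ^ 2) /
          ((a.factorial : ℝ) * k.factorial)) t := by
      have heq : (fun s => wterm h ((k : ℤ) - a) s k)
          = fun s => (s / h ^ 2) ^ (k + a) / ((a.factorial : ℝ) * k.factorial) := by
        funext s; exact wterm_eval h s k a
      rw [heq]
      have h1 : HasDerivAt (fun s : ℝ => s / h ^ 2) (1 / h ^ 2) t := by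
        simpa using (hasDerivAt_id t).div_const (h ^ 2)
      exact (h1.pow (k + a)).div_const _
    convert hderiv using 1
    unfold dterm
    rcases a with _ | b
    · -- a = 0, first term vanishes
      have hT1 : wterm h ((k : ℤ) - (0 : ℕ) + 1) t k = 0 :=
        wterm_neg _ _ _ _ (by push_cast; omega)
      rcases k with _ | m
      · rw [hT1]; norm_num
      · have hT2 : wterm h ((↑(m + 1) : ℤ) - (0 : ℕ) - 1) t (m + 1 - 1)
            = (t / h ^ 2) ^ (m + 0) / (((0 : ℕ).factorial : ℝ) * m.factorial) := by
          have : ((m + 1 : ℕ) : ℤ) - (0 : ℕ) - 1 = ((m : ℕ) : ℤ) - (0 : ℕ) := by push_cast; omega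
          rw [show (m + 1 - 1 : ℕ) = m from rfl, this, wterm_eval]
        rw [hT1, hT2, if_neg (by omega : ¬ m + 1 = 0)]
        have hm : (0 : ℝ) < (m.factorial : ℝ) := by positivity
        rw [show m + 1 + 0 - 1 = m from by omega, Nat.factorial_succ]
        push_cast
        field_simp
        ring
    · -- a = b + 1, first term present
      have hT1 : wterm h ((k : ℤ) - (b + 1 : ℕ) + 1) t k
          = (t / h ^ 2) ^ (k + b) / ((b.factorial : ℝ) * k.factorial) := by
        have : ((k : ℤ)) - ((b + 1 : ℕ) : ℤ) + 1 = (k : ℤ) - ((b : ℕ) : ℤ) := by push_cast; omega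
        rw [this, wterm_eval]
      rcases k with _ | m
      · rw [hT1, if_pos rfl]
        have hb : (0 : ℝ) < (b.factorial : ℝ) := by positivity
        rw [show 0 + (b + 1) - 1 = b from by omega, Nat.factorial_succ]
        push_cast
        field_simp
        ring
      · have hT2 : wterm h ((↑(m + 1) : ℤ) - (b + 1 : ℕ) - 1) t (m + 1 - 1)
            = (t / h ^ 2) ^ (m + (b + 1)) / (((b + 1 : ℕ).factorial : ℝ) * m.factorial) := by
          have : ((m + 1 : ℕ) : ℤ) - ((b + 1 : ℕ) : ℤ) - 1 = ((m : ℕ) : ℤ) - ((b + 1 : ℕ) : ℤ) := by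
            push_cast; omega
          rw [show (m + 1 - 1 : ℕ) = m from rfl, this, wterm_eval]
        rw [hT1, hT2, if_neg (by omega : ¬ m + 1 = 0)]
        have hb : (0 : ℝ) < (b.factorial : ℝ) := by positivity
        have hm : (0 : ℝ) < (m.factorial : ℝ) := by positivity
        rw [show m + 1 + (b + 1) - 1 = m + b + 1 from by omega,
          show m + (b + 1) = m + b + 1 from by omega,
          show m + 1 + b = m + b + 1 from by omega,
          Nat.factorial_succ b, Nat.factorial_succ m]
        push_cast
        field_simp
        ring
  · have h0 : (fun s => wterm h j s k) = fun _ => (0 : ℝ) := by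
      funext s; exact wterm_neg _ _ _ _ hjk
    have hd : dterm h j t k = 0 := by
      have hT1 : wterm h (j + 1) t k = 0 := wterm_neg _ _ _ _ (by omega)
      have hT2 : (if k = 0 then (0 : ℝ) else wterm h (j - 1) t (k - 1)) = 0 := by
        rcases Nat.eq_zero_or_pos k with hk0 | hk1
        · simp [hk0]
        · rw [if_neg (by omega)]
          exact wterm_neg _ _ _ _ (by omega)
      rw [dterm, hT1, hT2]
      simp
    rw [h0, hd]
    exact hasDerivAt_const t 0

lemma summable_shift {f : ℕ → ℝ} (hf : Summable f) :
    Summable (fun k : ℕ => if k = 0 then (0 : ℝ) else f (k - 1)) := by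
  have he : (fun n : ℕ => if n + 1 = 0 then (0 : ℝ) else f (n + 1 - 1)) = f := by
    funext n; simp
  exact (summable_nat_add_iff 1).1 (he ▸ hf)

lemma tsum_shift {f : ℕ → ℝ} (hf : Summable f) :
    ∑' k : ℕ, (if k = 0 then (0 : ℝ) else f (k - 1)) = ∑' k : ℕ, f k := by
  rw [Summable.tsum_eq_zero_add (summable_shift hf)]
  simp

lemma summable_wterm' (h : ℝ) (hh : 0 < h) (j : ℤ) (t : ℝ) (ht : 0 ≤ t) :
    Summable fun k : ℕ => wterm h j t k :=
  (summable_abs_wterm h hh j t ht).of_abs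

lemma summable_dterm (h : ℝ) (hh : 0 < h) (j : ℤ) (t : ℝ) (ht : 0 ≤ t) :
    Summable fun k : ℕ => dterm h j t k := by
  unfold dterm
  exact ((summable_wterm' h hh (j + 1) t ht).add
    (summable_shift (summable_wterm' h hh (j - 1) t ht))).div_const _

lemma dterm_nonneg (h : ℝ) (hh : 0 < h) (j : ℤ) (t : ℝ) (ht : 0 ≤ t) (k : ℕ) :
    0 ≤ dterm h j t k := by
  unfold dterm
  apply div_nonneg _ (by positivity)
  have h1 := wterm_nonneg h (j + 1) t k ht hh
  have h2 : 0 ≤ (if k = 0 then (0:ℝ) else wterm h (j - 1) t (k - 1)) := by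
    split
    · exact le_rfl
    · exact wterm_nonneg h (j - 1) t (k - 1) ht hh
  linarith

lemma dterm_mono (h : ℝ) (hh : 0 < h) (j : ℤ) (t t' : ℝ) (ht : 0 ≤ t) (htt : t ≤ t') (k : ℕ) :
    dterm h j t k ≤ dterm h j t' k := by
  unfold dterm
  apply div_le_div_of_nonneg_right ?_ (by positivity)
  apply add_le_add (wterm_mono h (j + 1) t t' k ht htt hh)
  split
  · exact le_rfl
  · exact wterm_mono h (j - 1) t t' (k - 1) ht htt hh

lemma tsum_dterm (h : ℝ) (hh : 0 < h) (j : ℤ) (t : ℝ) (ht : 0 ≤ t) :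
    ∑' k : ℕ, dterm h j t k
      = ((∑' k : ℕ, wterm h (j + 1) t k) + ∑' k : ℕ, wterm h (j - 1) t k) / h ^ 2 := by
  unfold dterm
  rw [tsum_div_const, Summable.tsum_add (summable_wterm' h hh (j + 1) t ht)
    (summable_shift (summable_wterm' h hh (j - 1) t ht)),
    tsum_shift (summable_wterm' h hh (j - 1) t ht)]

lemma hasDerivAt_S (h : ℝ) (hh : 0 < h) (j : ℤ) (t : ℝ) (ht : 0 < t) :
    HasDerivAt (fun s => ∑' k : ℕ, wterm h j s k)
      (((∑' k : ℕ, wterm h (j + 1) t k) + ∑' k : ℕ, wterm h (j - 1) t k) / h ^ 2) t := by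
  rw [← tsum_dterm h hh j t ht.le]
  apply hasDerivAt_tsum_of_isPreconnected (u := fun k => dterm h j (t + 1) k)
    (summable_dterm h hh j (t + 1) (by linarith)) isOpen_Ioo
    (convex_Ioo (0 : ℝ) (t + 1)).isPreconnected
    (fun k y _ => hasDerivAt_wterm h hh j k y)
    (fun k y hy => ?_) (Set.mem_Ioo.2 ⟨ht, by linarith⟩)
    (summable_wterm' h hh j t ht.le) (Set.mem_Ioo.2 ⟨ht, by linarith⟩)
  rw [Real.norm_eq_abs, abs_of_nonneg (dterm_nonneg h hh j y hy.1.le k)]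
  exact dterm_mono h hh j y (t + 1) hy.1.le hy.2.le k

/-- The series defining the one-dimensional discrete heat kernel
converges absolutely for all `j, t ≥ 0`; the kernel has initial value `(1/h)δ`,
and for `t > 0` it solves the one-dimensional discrete heat equation. -/
theorem discrete_heat_kernel_one_dim (h : ℝ) (hh : 0 < h) :
    (∀ (j : ℤ) (t : ℝ), 0 ≤ t → Summable fun k : ℕ => |wterm h j t k|) ∧
    (∀ j : ℤ, wker h j 0 = if j = 0 then 1 / h else 0) ∧
    (∀ (j : ℤ) (t : ℝ), 0 < t →
      HasDerivAt (fun s => wker h j s)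
        ((wker h (j + 1) t - 2 * wker h j t + wker h (j - 1) t) / h ^ 2) t) := by
  refine ⟨fun j t ht => summable_abs_wterm h hh j t ht, fun j => ?_, fun j t ht => ?_⟩
  · -- initial value
    unfold wker
    by_cases hj : j = 0
    · subst hj
      have : (fun k : ℕ => wterm h 0 0 k) = fun k : ℕ => if k = 0 then (1 : ℝ) else 0 := by
        funext k
        rw [wterm_zero]
        by_cases hk : k = 0 <;> simp [hk]
      rw [this, if_pos rfl, tsum_ite_eq (0 : ℕ) (fun _ => (1 : ℝ))]
      norm_num
    · have : (fun k : ℕ => wterm h j 0 k) = fun _ : ℕ => (0 : ℝ) := by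
        funext k
        rw [wterm_zero, if_neg (by tauto)]
      rw [this, if_neg hj, tsum_zero, mul_zero]
  · -- heat equation
    have hE : HasDerivAt (fun s : ℝ => Real.exp (-2 * s / h ^ 2))
        ((-2 / h ^ 2) * Real.exp (-2 * t / h ^ 2)) t := by
      have h1 : HasDerivAt (fun s : ℝ => -2 * s / h ^ 2) (-2 / h ^ 2) t := by
        simpa using ((hasDerivAt_id t).const_mul (-2 : ℝ)).div_const (h ^ 2)
      simpa [mul_comm] using h1.exp
    have hS := hasDerivAt_S h hh j t ht
    have hprod := ((hE.const_mul (1 / h)).mul hS)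
    have hfun : (fun s => wker h j s)
        = fun s => (1 / h * Real.exp (-2 * s / h ^ 2)) * ∑' k : ℕ, wterm h j s k := by
      funext s; rfl
    rw [hfun]
    refine hprod.congr_deriv ?_
    unfold wker
    have hh0 : (h : ℝ) ≠ 0 := ne_of_gt hh
    field_simp
    ring
end
end

section
/- Fix d ≥ 1. There is a constant C = C(d) such that for every h > 0 and every t > 0, the d-dimensional discrete heat kernel satisfies ‖Φ^h(t)‖_{L^∞_h} = sup_{j∈ℤ^d} |Φ^h_j(t)| ≤ C t^{−d/2}. -/
noncomputable section

/-- The `d`-dimensional discrete heat kernel `Φ^h_j(t) = ∏_{i=1}^d w^h_{j_i}(t)`. -/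
def Phiker (h : ℝ) {d : ℕ} (j : Fin d → ℤ) (t : ℝ) : ℝ :=
  ∏ i : Fin d, wker h (j i) t

/-- Unit lattice vector in direction `i`. -/
def gunit {d : ℕ} (i : Fin d) : Fin d → ℤ := fun k => if k = i then 1 else 0

/-- Forward difference operator `D_{+i}`. -/
def fdiff {d : ℕ} {E : Type*} [NormedAddCommGroup E] [NormedSpace ℝ E]
    (h : ℝ) (i : Fin d) (u : (Fin d → ℤ) → E) : (Fin d → ℤ) → E :=
  fun j => (h⁻¹ : ℝ) • (u (j + gunit i) - u j)

/-- Backward difference operator `D_{−i}`. -/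
def bdiff {d : ℕ} {E : Type*} [NormedAddCommGroup E] [NormedSpace ℝ E]
    (h : ℝ) (i : Fin d) (u : (Fin d → ℤ) → E) : (Fin d → ℤ) → E :=
  fun j => (h⁻¹ : ℝ) • (u j - u (j - gunit i))

namespace DHKaux


lemma cb_sq (m : ℕ) : ((Nat.centralBinom m : ℝ))^2 * (3*m+1) ≤ 16^m := by
  induction m with
  | zero => simp
  | succ m ih =>
    have h1 : ((m:ℝ)+1) * (Nat.centralBinom (m+1) : ℝ)
        = 2*(2*(m:ℝ)+1) * (Nat.centralBinom m : ℝ) := by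
      exact_mod_cast congrArg (fun n : ℕ => (n : ℝ)) (Nat.succ_mul_centralBinom_succ m)
    have hih : 16*((m:ℝ)+1)^2 * ((Nat.centralBinom m : ℝ)^2 * (3*m+1))
        ≤ 16*((m:ℝ)+1)^2 * 16^m := by
      have : (0:ℝ) ≤ 16*((m:ℝ)+1)^2 := by positivity
      exact mul_le_mul_of_nonneg_left ih this
    have hm1 : (0:ℝ) < ((m:ℝ)+1)^2 := by positivity
    have hcb : (0:ℝ) ≤ (Nat.centralBinom m : ℝ) := by positivity
    have hmn : (0:ℝ) ≤ (m:ℝ) := Nat.cast_nonneg m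
    have h1sq : (((m:ℝ)+1) * (Nat.centralBinom (m+1) : ℝ))^2 * (3*(m:ℝ)+4)
        = (2*(2*(m:ℝ)+1) * (Nat.centralBinom m : ℝ))^2 * (3*(m:ℝ)+4) := by rw [h1]
    have key : ((m:ℝ)+1)^2 * ((Nat.centralBinom (m+1) : ℝ)^2 * (3*(m+1)+1))
        ≤ ((m:ℝ)+1)^2 * 16^(m+1) := by
      push_cast
      nlinarith [h1sq, hih, pow_succ (16:ℝ) m, mul_nonneg hmn (sq_nonneg ((Nat.centralBinom m : ℝ)))]
    have := le_of_mul_le_mul_left (by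
      calc ((m:ℝ)+1)^2 * ((Nat.centralBinom (m+1) : ℝ)^2 * (3*(m+1)+1))
          ≤ ((m:ℝ)+1)^2 * 16^(m+1) := key) hm1
    push_cast at this ⊢
    linarith

lemma cb_sqrt (m : ℕ) : (Nat.centralBinom m : ℝ) * Real.sqrt (2*m+1) ≤ 4^m := by
  have h1 : ((Nat.centralBinom m : ℝ) * Real.sqrt (2*m+1))^2 ≤ ((4:ℝ)^m)^2 := by
    have hs : Real.sqrt (2*m+1) ^ 2 = 2*m+1 := Real.sq_sqrt (by positivity)
    have h2 : ((Nat.centralBinom m : ℝ))^2 * (2*m+1) ≤ ((Nat.centralBinom m : ℝ))^2 * (3*m+1) := by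
      have : (0:ℝ) ≤ ((Nat.centralBinom m : ℝ))^2 := sq_nonneg _
      nlinarith [Nat.cast_nonneg (α := ℝ) m]
    calc ((Nat.centralBinom m : ℝ) * Real.sqrt (2*m+1))^2
        = ((Nat.centralBinom m : ℝ))^2 * (2*m+1) := by rw [mul_pow, hs]
      _ ≤ ((Nat.centralBinom m : ℝ))^2 * (3*m+1) := h2
      _ ≤ 16^m := cb_sq m
      _ = ((4:ℝ)^m)^2 := by rw [← pow_mul, mul_comm m 2, pow_mul]; norm_num
  have ha : (0:ℝ) ≤ (Nat.centralBinom m : ℝ) * Real.sqrt (2*m+1) := by positivity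
  have hb : (0:ℝ) ≤ (4:ℝ)^m := by positivity
  nlinarith [h1, ha, hb]



lemma inj2 : Function.Injective (fun m : ℕ => 2*m) := by
  intro a b hab
  have : 2*a = 2*b := hab
  omega

lemma inj21 : Function.Injective (fun m : ℕ => 2*m+1) := by
  intro a b hab
  have : 2*a+1 = 2*b+1 := hab
  omega

lemma tsum_exp (y : ℝ) : ∑' n : ℕ, y ^ n / (n.factorial : ℝ) = Real.exp y := by
  rw [Real.exp_eq_exp_ℝ, NormedSpace.exp_eq_tsum_div]

lemma even_summable (y : ℝ) : Summable (fun m : ℕ => y^(2*m) / (((2*m).factorial : ℝ))) :=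
  (Real.summable_pow_div_factorial y).comp_injective inj2

lemma even_sum_le (y : ℝ) (hy : 0 ≤ y) :
    ∑' m : ℕ, y^(2*m) / (((2*m).factorial : ℝ)) ≤ Real.exp y := by
  have := tsum_comp_le_tsum_of_inj (Real.summable_pow_div_factorial y)
    (fun n => by positivity) inj2
  rw [tsum_exp] at this
  exact this

lemma odd_eq (y : ℝ) (hy : 0 < y) (m : ℕ) :
    y^(2*m) / (((2*m+1).factorial : ℝ)) = y^(2*m+1) / (((2*m+1).factorial : ℝ)) * y⁻¹ := by
  rw [pow_succ]
  field_simp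

lemma odd_summable (y : ℝ) (hy : 0 < y) :
    Summable (fun m : ℕ => y^(2*m) / (((2*m+1).factorial : ℝ))) := by
  have h := ((Real.summable_pow_div_factorial y).comp_injective inj21).mul_right y⁻¹
  exact h.congr (fun m => (odd_eq y hy m).symm)

lemma odd_sum_le (y : ℝ) (hy : 0 < y) :
    ∑' m : ℕ, y^(2*m) / (((2*m+1).factorial : ℝ)) ≤ Real.exp y / y := by
  have h1 : ∑' m : ℕ, y^(2*m) / (((2*m+1).factorial : ℝ))
      = (∑' m : ℕ, y^(2*m+1) / (((2*m+1).factorial : ℝ))) * y⁻¹ := by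
    rw [← tsum_mul_right]
    exact tsum_congr (fun m => odd_eq y hy m)
  have h2 := tsum_comp_le_tsum_of_inj (Real.summable_pow_div_factorial y)
    (fun n => by positivity) inj21
  rw [tsum_exp] at h2
  rw [h1, div_eq_mul_inv]
  exact mul_le_mul_of_nonneg_right h2 (by positivity)


lemma usq_summable (x : ℝ) (hx : 0 < x) :
    Summable (fun m : ℕ => (x^m / (m.factorial:ℝ))^2) := by
  apply Summable.of_nonneg_of_le (fun m => sq_nonneg _)
    (f := fun m : ℕ => (x^2)^m / (m.factorial : ℝ))
  · intro m
    have h1 : (x^m / (m.factorial:ℝ))^2 = (x^2)^m / ((m.factorial:ℝ) * m.factorial) := by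
      rw [div_pow, ← pow_mul, ← pow_mul, mul_comm m 2, sq]
    rw [h1]
    apply div_le_div_of_nonneg_left (by positivity) (by positivity)
    have h2 : (1:ℝ) ≤ (m.factorial : ℝ) := by exact_mod_cast Nat.one_le_iff_ne_zero.mpr m.factorial_pos.ne'
    nlinarith [(Nat.cast_pos (α := ℝ)).mpr m.factorial_pos]
  · exact Real.summable_pow_div_factorial (x^2)

lemma usq_term_le (x : ℝ) (hx : 0 < x) (m : ℕ) :
    (x^m / (m.factorial:ℝ))^2 ≤
      ((2*x)^(2*m) / (((2*m).factorial : ℝ)) * (Real.sqrt (2*x))⁻¹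
        + (2*x)^(2*m) / (((2*m+1).factorial : ℝ)) * Real.sqrt (2*x)) / 2 := by
  set A : ℝ := (2*x)^(2*m) / (((2*m).factorial : ℝ)) with hA
  set T : ℝ := Real.sqrt (2*m+1) with hT
  set Y : ℝ := Real.sqrt (2*x) with hY
  have hT0 : 0 < T := Real.sqrt_pos.mpr (by positivity)
  have hY0 : 0 < Y := Real.sqrt_pos.mpr (by positivity)
  have hT2 : T^2 = 2*m+1 := Real.sq_sqrt (by positivity)
  have hY2 : Y^2 = 2*x := Real.sq_sqrt (by positivity)
  have hA0 : 0 ≤ A := by positivity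
  -- step 1 : u m ^ 2 ≤ A / T
  have hfacR : ((Nat.centralBinom m : ℝ)) * ((m.factorial : ℝ) * (m.factorial : ℝ))
      = (((2*m).factorial : ℝ)) := by
    have := Nat.choose_mul_factorial_mul_factorial (Nat.le_mul_of_pos_left m two_pos)
    rw [show 2*m - m = m by omega] at this
    exact_mod_cast by rw [Nat.centralBinom]; push_cast [← this]; ring
  have hcb : (Nat.centralBinom m : ℝ) ≤ 4^m / T := by
    rw [le_div_iff₀ hT0]; exact cb_sqrt m
  have hu2 : (x^m / (m.factorial:ℝ))^2 = x^(2*m) * (Nat.centralBinom m : ℝ) / (((2*m).factorial : ℝ)) := by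
    have hm0 : (0:ℝ) < (m.factorial : ℝ) := by exact_mod_cast m.factorial_pos
    have h2m0 : (0:ℝ) < (((2*m).factorial : ℝ)) := by exact_mod_cast (2*m).factorial_pos
    rw [div_pow, ← pow_mul, mul_comm m 2]
    rw [div_eq_div_iff (by positivity) (by positivity)]
    calc x ^ (2*m) * ((2*m).factorial : ℝ)
        = x ^ (2*m) * ((Nat.centralBinom m : ℝ) * ((m.factorial : ℝ) * (m.factorial : ℝ))) := by
          rw [hfacR]
      _ = x ^ (2*m) * (Nat.centralBinom m : ℝ) * ((m.factorial:ℝ))^2 := by ring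
  have hyx : (2*x)^(2*m) = 4^m * x^(2*m) := by
    rw [mul_pow, pow_mul]
    norm_num
  have step1 : (x^m / (m.factorial:ℝ))^2 ≤ A / T := by
    rw [hu2, hA, hyx]
    rw [div_div]
    rw [div_le_div_iff₀ (by positivity) (by positivity)]
    have := mul_le_mul_of_nonneg_left hcb (le_of_lt (show (0:ℝ) < x^(2*m) by positivity))
    calc x ^ (2*m) * (Nat.centralBinom m:ℝ) * ((((2*m).factorial : ℝ)) * T)
        ≤ x ^ (2*m) * (4^m / T) * ((((2*m).factorial : ℝ)) * T) := by
          apply mul_le_mul_of_nonneg_right this (by positivity)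
      _ = 4 ^ m * x ^ (2*m) * (((2*m).factorial : ℝ)) := by field_simp
  -- step 2 : A / T ≤ (A * Y⁻¹ + (A / T^2) * Y)/2
  have hb : (2*x)^(2*m) / (((2*m+1).factorial : ℝ)) = A / T^2 := by
    rw [hA, hT2, div_div]
    congr 1
    rw [Nat.factorial_succ]
    push_cast
    ring
  have step2 : A / T ≤ (A * Y⁻¹ + A / T^2 * Y)/2 := by
    have key : (A * Y⁻¹ + A / T^2 * Y)/2 - A/T = A*(T-Y)^2/(2*T^2*Y) := by
      field_simp
      ring
    have : 0 ≤ A*(T-Y)^2/(2*T^2*Y) := by positivity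
    linarith
  rw [hb]
  calc (x^m / (m.factorial:ℝ))^2 ≤ A / T := step1
    _ ≤ (A * Y⁻¹ + A / T^2 * Y)/2 := step2

lemma usq_sum_le (x : ℝ) (hx : 0 < x) :
    ∑' m : ℕ, (x^m / (m.factorial:ℝ))^2 ≤ Real.exp (2*x) / Real.sqrt (2*x) := by
  set Y : ℝ := Real.sqrt (2*x) with hY
  have hY0 : 0 < Y := Real.sqrt_pos.mpr (by positivity)
  have hY2 : Y^2 = 2*x := Real.sq_sqrt (by positivity)
  have hsa := even_summable (2*x)
  have hsb := odd_summable (2*x) (by positivity)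
  have hs1 := (hsa.mul_right Y⁻¹).add (hsb.mul_right Y)
  have hle := Summable.tsum_le_tsum (usq_term_le x hx) (usq_summable x hx) (hs1.div_const 2)
  have heq : ∑' m : ℕ, (((2*x)^(2*m) / (((2*m).factorial : ℝ)) * Y⁻¹
        + (2*x)^(2*m) / (((2*m+1).factorial : ℝ)) * Y) / 2)
      = ((∑' m : ℕ, (2*x)^(2*m) / (((2*m).factorial : ℝ))) * Y⁻¹
        + (∑' m : ℕ, (2*x)^(2*m) / (((2*m+1).factorial : ℝ))) * Y) / 2 := by
    rw [tsum_div_const, Summable.tsum_add (hsa.mul_right _) (hsb.mul_right _), tsum_mul_right, tsum_mul_right]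
  rw [heq] at hle
  have h1 := even_sum_le (2*x) (by positivity)
  have h2 := odd_sum_le (2*x) (by positivity)
  have hfin : ((Real.exp (2*x)) * Y⁻¹ + (Real.exp (2*x) / (2*x)) * Y) / 2 = Real.exp (2*x) / Y := by
    rw [← hY2]
    field_simp
    ring
  calc ∑' m : ℕ, (x^m / (m.factorial:ℝ))^2
      ≤ ((∑' m : ℕ, (2*x)^(2*m) / (((2*m).factorial : ℝ))) * Y⁻¹
        + (∑' m : ℕ, (2*x)^(2*m) / (((2*m+1).factorial : ℝ))) * Y) / 2 := hle
    _ ≤ ((Real.exp (2*x)) * Y⁻¹ + (Real.exp (2*x) / (2*x)) * Y) / 2 := by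
        gcongr
    _ = Real.exp (2*x) / Y := hfin






lemma wterm_nonneg (h t : ℝ) (ht : 0 ≤ t) (hh : 0 < h) (j : ℤ) (k : ℕ) :
    0 ≤ wterm h j t k := by
  unfold wterm
  split_ifs
  · positivity
  · exact le_refl 0

lemma wterm_eq (h t : ℝ) (j : ℤ) (k : ℕ) (hjk : j ≤ (k:ℤ)) :
    wterm h j t k = ((t/h^2)^(((k:ℤ) - j).toNat) / ((((k:ℤ)-j).toNat.factorial : ℝ)))
      * ((t/h^2)^k / (k.factorial : ℝ)) := by
  unfold wterm
  rw [if_pos hjk]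
  have he : (2*(k:ℤ) - j).toNat = ((k:ℤ) - j).toNat + k := by omega
  rw [he, pow_add, mul_div_mul_comm]

lemma wker_nonneg (h t : ℝ) (hh : 0 < h) (ht : 0 ≤ t) (j : ℤ) : 0 ≤ wker h j t := by
  unfold wker
  have h1 : 0 ≤ ∑' k : ℕ, wterm h j t k :=
    tsum_nonneg (fun k => wterm_nonneg h t ht hh j k)
  positivity

lemma wker_le (h t : ℝ) (hh : 0 < h) (ht : 0 < t) (j : ℤ) :
    wker h j t ≤ 1 / Real.sqrt t := by
  set x : ℝ := t / h^2 with hxdef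
  have hx : 0 < x := by positivity
  set u : ℕ → ℝ := fun n => x^n / (n.factorial : ℝ) with hu
  set G : ℕ → ℝ := fun k =>
    if j ≤ (k:ℤ) then (u (((k:ℤ)-j).toNat))^2 else 0 with hG
  set n0 : ℕ := j.toNat with hn0
  set c : ℕ := ((n0:ℤ) - j).toNat with hc
  have husq : Summable (fun m : ℕ => (u m)^2) := usq_summable x hx
  -- shift structure of G
  have hGshift : ∀ m : ℕ, G ((fun m : ℕ => m + n0) m) = (u (m+c))^2 := by
    intro m
    have h1 : j ≤ ((m + n0 : ℕ) : ℤ) := by push_cast; omega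
    have h2 : (((m + n0 : ℕ) : ℤ) - j).toNat = m + c := by push_cast; omega
    simp only [hG, if_pos h1, h2]
  have hinj : Function.Injective (fun m : ℕ => m + n0) := fun a b hab => by
    have : a + n0 = b + n0 := hab
    omega
  have hsupp : Function.support G ⊆ Set.range (fun m : ℕ => m + n0) := by
    intro k hk
    have h1 : j ≤ (k:ℤ) := by
      by_contra hcon
      exact hk (by simp only [hG, if_neg hcon])
    refine ⟨k - n0, ?_⟩
    show k - n0 + n0 = k
    omega
  have htsumG : ∑' k, G k = ∑' m : ℕ, (u (m+c))^2 := by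
    rw [← Function.Injective.tsum_eq hinj hsupp]
    exact tsum_congr hGshift
  have hGsummable : Summable G := by
    rw [← Function.Injective.summable_iff hinj (fun k hk => by
      by_contra hne
      exact hk (hsupp hne))]
    exact ((husq.comp_injective (fun a b hab => by
      have : a + c = b + c := hab
      omega)).congr (fun m => rfl)).congr (fun m => (hGshift m).symm)
  have hGle : ∑' k, G k ≤ ∑' m : ℕ, (u m)^2 := by
    rw [htsumG]
    exact tsum_comp_le_tsum_of_inj husq (fun m => sq_nonneg _)
      (i := fun m : ℕ => m + c) (fun a b hab => by
        have : a + c = b + c := hab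
        omega)
  have hterm : ∀ k : ℕ, wterm h j t k ≤ (G k + (u k)^2)/2 := by
    intro k
    by_cases hjk : j ≤ (k:ℤ)
    · rw [wterm_eq h t j k hjk]
      simp only [hG, if_pos hjk]
      nlinarith [sq_nonneg (u (((k:ℤ)-j).toNat) - u k)]
    · simp only [wterm, if_neg hjk, hG]
      nlinarith [sq_nonneg (u k)]
  have hwsummable : Summable (wterm h j t) :=
    Summable.of_nonneg_of_le (wterm_nonneg h t ht.le hh j) hterm
      ((hGsummable.add (husq)).div_const 2)
  have hS : ∑' k, wterm h j t k ≤ ∑' m : ℕ, (u m)^2 := by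
    have h1 := Summable.tsum_le_tsum hterm hwsummable ((hGsummable.add husq).div_const 2)
    have h2 : ∑' k : ℕ, (G k + (u k)^2)/2
        = ((∑' k, G k) + ∑' m : ℕ, (u m)^2)/2 := by
      rw [tsum_div_const, Summable.tsum_add hGsummable husq]
    rw [h2] at h1
    linarith
  have hSum_le : ∑' k, wterm h j t k ≤ Real.exp (2*x) / Real.sqrt (2*x) :=
    hS.trans (usq_sum_le x hx)
  -- final computation
  have hexp : Real.exp (-2 * t / h ^ 2) = (Real.exp (2*x))⁻¹ := by
    rw [← Real.exp_neg]
    congr 1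
    rw [hxdef]
    field_simp
  have hsq2t : Real.sqrt (2*t) = h * Real.sqrt (2*x) := by
    rw [show 2*t = h^2*(2*x) by rw [hxdef]; field_simp, Real.sqrt_mul (by positivity),
      Real.sqrt_sq hh.le]
  have hst : 0 < Real.sqrt t := Real.sqrt_pos.mpr ht
  have hsx : 0 < Real.sqrt (2*x) := Real.sqrt_pos.mpr (by positivity)
  calc wker h j t
      ≤ (1 / h) * Real.exp (-2 * t / h ^ 2) * (Real.exp (2*x) / Real.sqrt (2*x)) := by
        unfold wker
        apply mul_le_mul_of_nonneg_left hSum_le (by positivity)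
    _ = 1 / Real.sqrt (2*t) := by
        rw [hexp, hsq2t]
        have he : Real.exp (2*x) ≠ 0 := (Real.exp_pos _).ne'
        field_simp
    _ ≤ 1 / Real.sqrt t := by
        apply one_div_le_one_div_of_le hst
        apply Real.sqrt_le_sqrt
        linarith

end DHKaux

/-- `‖Φ^h(t)‖_{L^∞_h} ≤ C t^{−d/2}` with `C = C(d)` independent of
the mesh size. -/
theorem discrete_heat_kernel_Linfty_bound (d : ℕ) (hd : 1 ≤ d) :
    ∃ C : ℝ, 0 < C ∧
      ∀ h : ℝ, 0 < h → ∀ t : ℝ, 0 < t → ∀ j : Fin d → ℤ,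
        |Phiker h j t| ≤ C * t ^ (-((d : ℝ) / 2)) := by
  refine ⟨1, one_pos, fun h hh t ht j => ?_⟩
  have hnn : ∀ i : Fin d, 0 ≤ wker h (j i) t :=
    fun i => DHKaux.wker_nonneg h t hh ht.le (j i)
  have hP0 : 0 ≤ Phiker h j t := Finset.prod_nonneg (fun i _ => hnn i)
  have hPle : Phiker h j t ≤ (1 / Real.sqrt t)^d := by
    unfold Phiker
    calc ∏ i : Fin d, wker h (j i) t
        ≤ ∏ _i : Fin d, (1 / Real.sqrt t) :=
          Finset.prod_le_prod (fun i _ => hnn i)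
            (fun i _ => DHKaux.wker_le h t hh ht (j i))
      _ = (1 / Real.sqrt t)^d := by
          rw [Finset.prod_const, Finset.card_univ, Fintype.card_fin]
  have hrpow : (1 / Real.sqrt t)^d = t ^ (-((d : ℝ) / 2)) := by
    rw [one_div, Real.sqrt_eq_rpow, ← Real.rpow_neg ht.le,
      ← Real.rpow_natCast (t ^ (-(1/2 : ℝ))) d, ← Real.rpow_mul ht.le]
    congr 1
    ring
  rw [abs_of_nonneg hP0, one_mul, ← hrpow]
  exact hPle
end
end

section
/- Fix d ≥ 1. There is a constant C = C(d) such that for every h > 0, every t > 0, every 1 ≤ i ≤ d and either sign σ ∈ {+,−}, the first differences of the d-dimensional discrete heat kernel satisfy sup_{j∈ℤ^d} |(D_{σi} Φ^h(t))_j| ≤ C t^{−(1/2 + d/2)}. -/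
noncomputable section

namespace DHK
open Real

/-- Poisson weight `e^{-τ} τ^m / m!`. -/
def P (τ : ℝ) (m : ℕ) : ℝ := Real.exp (-τ) * τ ^ m / m.factorial

lemma P_nonneg {τ : ℝ} (hτ : 0 < τ) (m : ℕ) : 0 ≤ P τ m := by
  unfold P; positivity

lemma summable_P (τ : ℝ) : Summable (P τ) := by
  have := (Real.summable_pow_div_factorial τ).mul_left (Real.exp (-τ))
  refine this.congr fun m => ?_
  simp [P, mul_div_assoc]

lemma tsum_exp (τ : ℝ) : ∑' m : ℕ, τ ^ m / (m.factorial : ℝ) = Real.exp τ := by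
  rw [Real.exp_eq_exp_ℝ, NormedSpace.exp_eq_tsum_div]

lemma tsum_P {τ : ℝ} (hτ : 0 < τ) : ∑' m, P τ m = 1 := by
  unfold P
  simp only [mul_div_assoc]
  rw [tsum_mul_left, tsum_exp, ← Real.exp_add]
  simp

lemma P_le_one {τ : ℝ} (hτ : 0 < τ) (m : ℕ) : P τ m ≤ 1 := by
  have h1 : τ ^ m / (m.factorial : ℝ) ≤ Real.exp τ := by
    rw [← tsum_exp τ]
    exact Summable.le_tsum (Real.summable_pow_div_factorial τ) m (fun j _ => by positivity)
  have : P τ m ≤ Real.exp (-τ) * Real.exp τ := by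
    unfold P
    rw [mul_div_assoc]
    exact mul_le_mul_of_nonneg_left h1 (Real.exp_pos _).le
  simpa [← Real.exp_add] using this

lemma P_succ {τ : ℝ} (hτ : 0 < τ) (m : ℕ) : P τ (m + 1) = τ / (m + 1) * P τ m := by
  unfold P
  rw [Nat.factorial_succ, pow_succ]
  push_cast
  field_simp

lemma summable_P_mul_id {τ : ℝ} (hτ : 0 < τ) : Summable (fun m : ℕ => P τ m * m) := by
  rw [← summable_nat_add_iff 1]
  refine ((summable_P τ).mul_left τ).congr fun m => ?_
  rw [P_succ hτ]
  push_cast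
  field_simp

lemma tsum_P_mul_id {τ : ℝ} (hτ : 0 < τ) : ∑' m : ℕ, P τ m * m = τ := by
  rw [Summable.tsum_eq_zero_add (summable_P_mul_id hτ)]
  have h : ∀ m : ℕ, P τ (m + 1) * ((m : ℝ) + 1) = τ * P τ m := by
    intro m
    rw [P_succ hτ]
    field_simp
  simp only [Nat.cast_add, Nat.cast_one, h]
  rw [tsum_mul_left, tsum_P hτ]
  simp

lemma summable_P_mul_id2 {τ : ℝ} (hτ : 0 < τ) :
    Summable (fun m : ℕ => P τ m * (m * ((m : ℝ) - 1))) := by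
  rw [← summable_nat_add_iff 2]
  refine ((summable_P τ).mul_left (τ ^ 2)).congr fun m => ?_
  rw [show m + 2 = (m + 1) + 1 by ring, P_succ hτ, P_succ hτ]
  push_cast
  field_simp
  ring

lemma tsum_P_mul_id2 {τ : ℝ} (hτ : 0 < τ) :
    ∑' m : ℕ, P τ m * (m * ((m : ℝ) - 1)) = τ ^ 2 := by
  rw [Summable.tsum_eq_zero_add (summable_P_mul_id2 hτ)]
  rw [Summable.tsum_eq_zero_add ((summable_nat_add_iff 1).mpr (summable_P_mul_id2 hτ))]
  have h : ∀ m : ℕ, P τ (m + 1 + 1) * ((m + 1 + 1) * (((m : ℝ) + 1 + 1) - 1)) = τ ^ 2 * P τ m := by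
    intro m
    rw [P_succ hτ, P_succ hτ]
    push_cast
    field_simp
    ring
  push_cast
  simp only [h]
  rw [tsum_mul_left, tsum_P hτ]
  norm_num

lemma summable_P_moment {τ : ℝ} (hτ : 0 < τ) :
    Summable (fun m : ℕ => P τ m * ((m : ℝ) - τ) ^ 2) := by
  have : (fun m : ℕ => P τ m * ((m : ℝ) - τ) ^ 2) =
      fun m : ℕ => P τ m * (m * ((m : ℝ) - 1)) + ((1 - 2 * τ) * (P τ m * m) + τ ^ 2 * P τ m) := by
    funext m; ring
  rw [this]
  exact (summable_P_mul_id2 hτ).add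
    (((summable_P_mul_id hτ).mul_left _).add ((summable_P τ).mul_left _))

lemma tsum_P_moment {τ : ℝ} (hτ : 0 < τ) :
    ∑' m : ℕ, P τ m * ((m : ℝ) - τ) ^ 2 = τ := by
  have key : ∀ m : ℕ, P τ m * ((m : ℝ) - τ) ^ 2 =
      P τ m * (m * ((m : ℝ) - 1)) + ((1 - 2 * τ) * (P τ m * m) + τ ^ 2 * P τ m) := by
    intro m; ring
  simp only [key]
  rw [Summable.tsum_add (summable_P_mul_id2 hτ)
    (((summable_P_mul_id hτ).mul_left _).add ((summable_P τ).mul_left _)),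
    Summable.tsum_add ((summable_P_mul_id hτ).mul_left _) ((summable_P τ).mul_left _),
    tsum_mul_left, tsum_mul_left, tsum_P_mul_id2 hτ, tsum_P_mul_id hτ, tsum_P hτ]
  ring


lemma stirling_lower (m : ℕ) (hm : 1 ≤ m) :
    Real.sqrt (2 * m) * ((m : ℝ) / Real.exp 1) ^ m ≤ (m.factorial : ℝ) := by
  obtain ⟨n, rfl⟩ := Nat.exists_eq_add_of_le hm
  have h1 : Real.sqrt π ≤ Stirling.stirlingSeq (1 + n) := by
    have := Stirling.stirlingSeq'_antitone.le_of_tendsto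
      (by
        have := Stirling.tendsto_stirlingSeq_sqrt_pi
        rw [← Filter.tendsto_add_atTop_iff_nat 1] at this
        exact this.congr fun n => by simp [Function.comp, Nat.succ_eq_add_one, Nat.add_comm]) n
    simpa [Function.comp, Nat.succ_eq_add_one, Nat.add_comm] using this
  have hpi : (1 : ℝ) ≤ Real.sqrt π := by
    rw [show (1:ℝ) = Real.sqrt 1 by simp]
    exact Real.sqrt_le_sqrt (by linarith [Real.pi_gt_three])
  set m := 1 + n
  rw [Stirling.stirlingSeq] at h1
  have hd : 0 < Real.sqrt (2 * m) * ((m : ℝ) / Real.exp 1) ^ m := by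
    have : (0:ℝ) < m := by positivity
    positivity
  rw [le_div_iff₀ hd] at h1
  nlinarith

lemma P_le_seven {τ : ℝ} (hτ : 1 ≤ τ) (m : ℕ) : P τ m ≤ 7 / Real.sqrt τ := by
  have hτ0 : 0 < τ := lt_of_lt_of_le one_pos hτ
  have hsτ : 0 < Real.sqrt τ := Real.sqrt_pos.mpr hτ0
  have hsτ1 : 1 ≤ Real.sqrt τ := by
    rw [show (1:ℝ) = Real.sqrt 1 by simp]; exact Real.sqrt_le_sqrt hτ
  have hstτ : Real.sqrt τ ≤ τ := by nlinarith [Real.sq_sqrt hτ0.le]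
  rcases Nat.eq_zero_or_pos m with hm | hm
  · subst hm
    have h1 : Real.exp (-τ) ≤ 1 / τ := by
      rw [Real.exp_neg, one_div]
      exact inv_anti₀ hτ0 (by linarith [Real.add_one_le_exp τ])
    calc P τ 0 = Real.exp (-τ) := by simp [P]
      _ ≤ 1 / τ := h1
      _ ≤ 7 / Real.sqrt τ := by
        rw [div_le_div_iff₀ hτ0 hsτ]
        nlinarith
  · -- m ≥ 1
    have hmR : (0:ℝ) < m := by exact_mod_cast hm
    have hfact := stirling_lower m hm
    have hden : 0 < Real.sqrt (2 * m) * ((m : ℝ) / Real.exp 1) ^ m := by positivity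
    have hs2m : 1 ≤ Real.sqrt (2 * m) := by
      rw [show (1:ℝ) = Real.sqrt 1 by simp]
      refine Real.sqrt_le_sqrt ?_
      have : (1:ℝ) ≤ m := by exact_mod_cast hm
      linarith
    -- P τ m ≤ exp g / sqrt (2m), g = m + m log(τ/m) - τ
    set g : ℝ := m + m * Real.log (τ / m) - τ with hg
    have hPle : P τ m ≤ Real.exp g / Real.sqrt (2 * m) := by
      have h1 : P τ m ≤ Real.exp (-τ) * τ ^ m / (Real.sqrt (2 * m) * ((m : ℝ) / Real.exp 1) ^ m) := by
        unfold P
        apply div_le_div_of_nonneg_left (by positivity) hden hfact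
      have h2 : Real.exp (-τ) * τ ^ m / (Real.sqrt (2 * m) * ((m : ℝ) / Real.exp 1) ^ m)
          = Real.exp g / Real.sqrt (2 * m) := by
        have hτm : (0:ℝ) < τ / m := by positivity
        have hE : Real.exp (-τ) * τ ^ m / ((m : ℝ) / Real.exp 1) ^ m = Real.exp g := by
          rw [hg]
          rw [show (m:ℝ) + m * Real.log (τ / m) - τ = (-τ) + ((m:ℝ) * (1 + Real.log (τ/m))) by ring]
          rw [Real.exp_add, Real.exp_nat_mul, Real.exp_add, Real.exp_log hτm]
          rw [div_pow, mul_pow]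
          field_simp
          ring_nf; rw [mul_assoc, ← mul_pow, mul_inv_cancel₀ hmR.ne', one_pow, mul_one]
        rw [← hE]
        field_simp
      rw [h2] at h1; exact h1
    rcases le_or_gt (2 * (m:ℝ)) τ with hcase | hcase
    · -- small m: g ≤ -(1 - log 2)/2 * τ
      have hlog : Real.log (τ / m) ≤ Real.log 2 + (τ / (2 * m) - 1) := by
        have : τ / m = 2 * (τ / (2 * m)) := by field_simp
        rw [this, Real.log_mul two_ne_zero (by positivity)]
        have := Real.log_le_sub_one_of_pos (show (0:ℝ) < τ / (2*m) by positivity)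
        linarith
      have hglee : g ≤ -((1 - Real.log 2)/2 * τ) := by
        have hmul : (m:ℝ) * Real.log (τ / m) ≤ (m:ℝ) * Real.log 2 + τ/2 - m := by
          have h' := mul_le_mul_of_nonneg_left hlog hmR.le
          have : (m:ℝ) * (τ / (2*m)) = τ/2 := by field_simp
          nlinarith
        have hlog2 : (0:ℝ) ≤ Real.log 2 := Real.log_nonneg (by norm_num)
        have hm2 : (m:ℝ) ≤ τ/2 := by linarith
        rw [hg]
        nlinarith
      set c : ℝ := (1 - Real.log 2)/2 with hc
      have hc0 : 0 < c := by
        have := Real.log_two_lt_d9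
        rw [hc]; norm_num; linarith
      have hc7 : 1 ≤ 7 * c := by
        have := Real.log_two_lt_d9
        rw [hc]; norm_num; linarith
      have h1 : P τ m ≤ Real.exp (-(c*τ)) := by
        refine hPle.trans ?_
        calc Real.exp g / Real.sqrt (2*m) ≤ Real.exp g / 1 := by
              apply div_le_div_of_nonneg_left (Real.exp_pos _).le one_pos hs2m
          _ = Real.exp g := by ring
          _ ≤ Real.exp (-(c*τ)) := by
              apply Real.exp_le_exp.mpr; linarith
      have h2 : Real.exp (-(c*τ)) ≤ 1 / (c * Real.sqrt τ) := by
        rw [Real.exp_neg, one_div]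
        apply inv_anti₀ (by positivity)
        calc c * Real.sqrt τ ≤ c * τ := by nlinarith
          _ ≤ Real.exp (c * τ) := by linarith [Real.add_one_le_exp (c*τ)]
      refine h1.trans (h2.trans ?_)
      rw [div_le_div_iff₀ (by positivity) hsτ]
      nlinarith
    · -- large m : g ≤ 0 and sqrt(2m) ≥ sqrt τ
      have hg0 : g ≤ 0 := by
        have := Real.log_le_sub_one_of_pos (show (0:ℝ) < τ / m by positivity)
        have h' := mul_le_mul_of_nonneg_left this hmR.le
        have : (m:ℝ) * (τ/m) = τ := by field_simp
        rw [hg]; nlinarith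
      have hsle : Real.sqrt τ ≤ Real.sqrt (2*m) := Real.sqrt_le_sqrt (by linarith)
      refine hPle.trans ?_
      calc Real.exp g / Real.sqrt (2*m) ≤ 1 / Real.sqrt τ := by
            apply div_le_div₀ (by norm_num) ?_ hsτ hsle
            simpa using Real.exp_le_exp.mpr hg0
        _ ≤ 7 / Real.sqrt τ := by gcongr <;> norm_num


lemma P_le_M {τ : ℝ} (hτ : 0 < τ) (m : ℕ) : P τ m ≤ 7 / Real.sqrt τ := by
  rcases le_or_gt 1 τ with h1 | h1
  · exact P_le_seven h1 m
  · have hs : 0 < Real.sqrt τ := Real.sqrt_pos.mpr hτ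
    have hs1 : Real.sqrt τ ≤ 1 := by
      rw [show (1:ℝ) = Real.sqrt 1 by simp]
      exact Real.sqrt_le_sqrt h1.le
    refine (P_le_one hτ m).trans ?_
    rw [le_div_iff₀ hs]
    nlinarith

def Pz (τ : ℝ) (n : ℤ) : ℝ := if 0 ≤ n then P τ n.toNat else 0

lemma Pz_nonneg {τ : ℝ} (hτ : 0 < τ) (n : ℤ) : 0 ≤ Pz τ n := by
  unfold Pz; split_ifs
  · exact P_nonneg hτ _
  · exact le_rfl
lemma Pz_le_one {τ : ℝ} (hτ : 0 < τ) (n : ℤ) : Pz τ n ≤ 1 := by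
  unfold Pz; split_ifs
  · exact P_le_one hτ _
  · norm_num
lemma Pz_le_M {τ : ℝ} (hτ : 0 < τ) (n : ℤ) : Pz τ n ≤ 7 / Real.sqrt τ := by
  unfold Pz; split_ifs
  · exact P_le_M hτ _
  · positivity

def qz (τ : ℝ) (n : ℤ) : ℝ := Pz τ n - Pz τ (n - 1)

lemma qz_neg {τ : ℝ} (n : ℤ) (hn : n < 0) : qz τ n = 0 := by
  unfold qz Pz
  rw [if_neg (by omega), if_neg (by omega)]
  ring

lemma qz_coe {τ : ℝ} (hτ : 0 < τ) (m : ℕ) : qz τ (m : ℤ) = P τ m * (τ - m) / τ := by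
  unfold qz Pz
  cases m with
  | zero =>
    rw [if_pos (by norm_num), if_neg (by norm_num)]
    norm_num
    field_simp
  | succ m =>
    rw [if_pos (by positivity), if_pos (by omega)]
    have h1 : ((m : ℤ) + 1 - 1).toNat = m := by omega
    have h2 : (((m : ℕ) + 1 : ℕ) : ℤ).toNat = m + 1 := by omega
    push_cast
    rw [show ((m:ℤ) + 1 - 1) = (m:ℤ) by ring]
    simp only [Int.toNat_natCast, show ((m:ℤ)+1) = ((m+1 : ℕ) : ℤ) by push_cast; ring,
      Int.toNat_natCast]
    rw [P_succ hτ]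
    have hm1 : ((m:ℝ) + 1) ≠ 0 := by positivity
    field_simp

lemma qz_abs_le {τ : ℝ} (hτ : 0 < τ) (n : ℤ) : |qz τ n| ≤ 2 := by
  unfold qz
  have h1 := Pz_nonneg hτ n
  have h2 := Pz_nonneg hτ (n-1)
  have h3 := Pz_le_one hτ n
  have h4 := Pz_le_one hτ (n-1)
  rw [abs_le]; constructor <;> linarith

/-- Shift lemma: summing a nonneg function vanishing on negatives along `k ↦ k - j`. -/
lemma shift_summable (F : ℤ → ℝ) (hneg : ∀ n : ℤ, n < 0 → F n = 0) (h0 : ∀ n, 0 ≤ F n)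
    (hs : Summable (fun m : ℕ => F (m : ℤ))) (j : ℤ) :
    Summable (fun k : ℕ => F ((k : ℤ) - j)) ∧
      ∑' k : ℕ, F ((k : ℤ) - j) ≤ ∑' m : ℕ, F (m : ℤ) := by
  rcases le_or_gt 0 j with hj | hj
  · set a := j.toNat with ha
    have haj : (a : ℤ) = j := Int.toNat_of_nonneg hj
    have hcongr : ∀ n : ℕ, F ((n : ℤ)) = F (((n + a : ℕ) : ℤ) - j) := by
      intro n; congr 1; push_cast; omega
    have hsf : Summable (fun k : ℕ => F ((k : ℤ) - j)) := by
      apply (summable_nat_add_iff a).mp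
      exact hs.congr hcongr
    constructor
    · exact hsf
    · have key := Summable.sum_add_tsum_nat_add a hsf
      have hzero : ∑ i ∈ Finset.range a, F ((i : ℤ) - j) = 0 := by
        apply Finset.sum_eq_zero
        intro i hi
        apply hneg
        have := Finset.mem_range.mp hi
        omega
      have : ∑' k : ℕ, F ((k : ℤ) - j) = ∑' n : ℕ, F (((n + a : ℕ) : ℤ) - j) := by
        rw [← key, hzero, zero_add]
      rw [this, ← tsum_congr hcongr]
  · set b := (-j).toNat with hb
    have hbj : (b : ℤ) = -j := Int.toNat_of_nonneg (by omega)
    have hcongr : ∀ k : ℕ, F ((k : ℤ) - j) = F (((k + b : ℕ) : ℤ)) := by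
      intro k; congr 1; push_cast; omega
    have hsf : Summable (fun k : ℕ => F ((k : ℤ) - j)) := by
      refine (((summable_nat_add_iff b).mpr hs).congr ?_)
      intro k; exact (hcongr k).symm
    constructor
    · exact hsf
    · calc ∑' k : ℕ, F ((k : ℤ) - j) = ∑' k : ℕ, F (((k + b : ℕ) : ℤ)) := tsum_congr hcongr
        _ ≤ ∑' m : ℕ, F (m : ℤ) := by
            rw [← Summable.sum_add_tsum_nat_add b hs]
            have : 0 ≤ ∑ i ∈ Finset.range b, F ((i : ℕ) : ℤ) :=
              Finset.sum_nonneg fun i _ => h0 _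
            push_cast
            linarith


def Sker (τ : ℝ) (j : ℤ) : ℝ := ∑' k : ℕ, P τ k * Pz τ ((k : ℤ) - j)

lemma summable_Sker {τ : ℝ} (hτ : 0 < τ) (j : ℤ) :
    Summable (fun k : ℕ => P τ k * Pz τ ((k : ℤ) - j)) := by
  apply Summable.of_nonneg_of_le
    (fun k => mul_nonneg (P_nonneg hτ k) (Pz_nonneg hτ _))
    (fun k => ?_) (summable_P τ)
  calc P τ k * Pz τ ((k:ℤ) - j) ≤ P τ k * 1 :=
        mul_le_mul_of_nonneg_left (Pz_le_one hτ _) (P_nonneg hτ k)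
    _ = P τ k := by ring

lemma Sker_nonneg {τ : ℝ} (hτ : 0 < τ) (j : ℤ) : 0 ≤ Sker τ j :=
  tsum_nonneg fun k => mul_nonneg (P_nonneg hτ k) (Pz_nonneg hτ _)

lemma Sker_le {τ : ℝ} (hτ : 0 < τ) (j : ℤ) : Sker τ j ≤ 7 / Real.sqrt τ := by
  have h1 : Sker τ j ≤ ∑' k : ℕ, (7 / Real.sqrt τ) * P τ k := by
    apply Summable.tsum_le_tsum ?_ (summable_Sker hτ j) ((summable_P τ).mul_left _)
    intro k
    calc P τ k * Pz τ ((k:ℤ) - j) ≤ P τ k * (7 / Real.sqrt τ) :=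
          mul_le_mul_of_nonneg_left (Pz_le_M hτ _) (P_nonneg hτ k)
      _ = (7 / Real.sqrt τ) * P τ k := by ring
  rwa [tsum_mul_left, tsum_P hτ, mul_one] at h1

lemma summable_P_sq {τ : ℝ} (hτ : 0 < τ) : Summable (fun k : ℕ => (P τ k) ^ 2) := by
  apply Summable.of_nonneg_of_le (fun k => sq_nonneg _) (fun k => ?_) (summable_P τ)
  calc (P τ k)^2 = P τ k * P τ k := sq (P τ k) ▸ rfl
    _ ≤ P τ k * 1 := mul_le_mul_of_nonneg_left (P_le_one hτ k) (P_nonneg hτ k)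
    _ = P τ k := by ring

lemma tsum_P_sq_le {τ : ℝ} (hτ : 0 < τ) : ∑' k : ℕ, (P τ k) ^ 2 ≤ 7 / Real.sqrt τ := by
  have h1 : ∑' k : ℕ, (P τ k)^2 ≤ ∑' k : ℕ, (7 / Real.sqrt τ) * P τ k := by
    apply Summable.tsum_le_tsum ?_ (summable_P_sq hτ) ((summable_P τ).mul_left _)
    intro k
    calc (P τ k)^2 = P τ k * P τ k := by ring
      _ ≤ (7 / Real.sqrt τ) * P τ k :=
          mul_le_mul_of_nonneg_right (P_le_M hτ k) (P_nonneg hτ k)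
  rwa [tsum_mul_left, tsum_P hτ, mul_one] at h1

lemma q_sq_le {τ : ℝ} (hτ : 0 < τ) (m : ℕ) :
    (qz τ (m : ℤ))^2 ≤ (7 / Real.sqrt τ) / τ^2 * (P τ m * ((m:ℝ) - τ)^2) := by
  rw [qz_coe hτ]
  have h := P_le_M hτ m
  have hP := P_nonneg hτ m
  have : (P τ m * (τ - m) / τ)^2 = P τ m * (P τ m * ((m:ℝ) - τ)^2) / τ^2 := by
    field_simp; ring
  rw [this]
  have hmom : (0:ℝ) ≤ P τ m * ((m:ℝ) - τ)^2 := by positivity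
  have hbd : P τ m * (P τ m * ((m:ℝ) - τ)^2) ≤ 7 / Real.sqrt τ * (P τ m * ((m:ℝ)-τ)^2) :=
    mul_le_mul_of_nonneg_right h hmom
  rw [div_mul_eq_mul_div, div_le_div_iff₀ (by positivity) (by positivity)]
  nlinarith [mul_le_mul_of_nonneg_right hbd (sq_nonneg τ)]

lemma summable_q_sq {τ : ℝ} (hτ : 0 < τ) : Summable (fun m : ℕ => (qz τ (m : ℤ))^2) := by
  apply Summable.of_nonneg_of_le (fun m => sq_nonneg _) (fun m => q_sq_le hτ m)
  exact (summable_P_moment hτ).mul_left _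

lemma tsum_q_sq_le {τ : ℝ} (hτ : 0 < τ) :
    ∑' m : ℕ, (qz τ (m : ℤ))^2 ≤ 7 / (τ * Real.sqrt τ) := by
  have h1 : ∑' m : ℕ, (qz τ (m:ℤ))^2 ≤
      ∑' m : ℕ, (7 / Real.sqrt τ) / τ^2 * (P τ m * ((m:ℝ) - τ)^2) :=
    Summable.tsum_le_tsum (fun m => q_sq_le hτ m) (summable_q_sq hτ)
      ((summable_P_moment hτ).mul_left _)
  rw [tsum_mul_left, tsum_P_moment hτ] at h1
  refine h1.trans (le_of_eq ?_)
  have hs : Real.sqrt τ ≠ 0 := (Real.sqrt_pos.mpr hτ).ne'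
  field_simp

/-- The key difference bound. -/
lemma Sker_diff {τ : ℝ} (hτ : 0 < τ) (j : ℤ) :
    |Sker τ (j + 1) - Sker τ j| ≤ 14 / τ := by
  have hsq := Real.sqrt_pos.mpr hτ
  -- rewrite difference as a single tsum
  have hterm : ∀ k : ℕ, P τ k * Pz τ ((k:ℤ) - (j+1)) - P τ k * Pz τ ((k:ℤ) - j)
      = -(P τ k * qz τ ((k:ℤ) - j)) := by
    intro k
    have : ((k:ℤ) - (j+1)) = ((k:ℤ) - j) - 1 := by ring
    rw [this]
    unfold qz
    ring
  have hdiff : Sker τ (j+1) - Sker τ j = ∑' k : ℕ, -(P τ k * qz τ ((k:ℤ) - j)) := by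
    unfold Sker
    rw [← Summable.tsum_sub (summable_Sker hτ (j+1)) (summable_Sker hτ j)]
    exact tsum_congr hterm
  -- summability of the abs series
  have habs_le : ∀ k : ℕ, |P τ k * qz τ ((k:ℤ) - j)| ≤ 2 * P τ k := by
    intro k
    rw [abs_mul, abs_of_nonneg (P_nonneg hτ k)]
    calc P τ k * |qz τ ((k:ℤ) - j)| ≤ P τ k * 2 :=
          mul_le_mul_of_nonneg_left (qz_abs_le hτ _) (P_nonneg hτ k)
      _ = 2 * P τ k := by ring
  have hsabs : Summable (fun k : ℕ => |P τ k * qz τ ((k:ℤ) - j)|) := by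
    apply Summable.of_nonneg_of_le (fun k => abs_nonneg _) habs_le
    exact (summable_P τ).mul_left 2
  have hmain : |Sker τ (j+1) - Sker τ j| ≤ ∑' k : ℕ, |P τ k * qz τ ((k:ℤ) - j)| := by
    rw [hdiff]
    calc |∑' k : ℕ, -(P τ k * qz τ ((k:ℤ) - j))|
        = ‖∑' k : ℕ, -(P τ k * qz τ ((k:ℤ) - j))‖ := (Real.norm_eq_abs _).symm
      _ ≤ ∑' k : ℕ, ‖-(P τ k * qz τ ((k:ℤ) - j))‖ :=
          norm_tsum_le_tsum_norm (hsabs.congr fun k => by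
            rw [norm_neg, Real.norm_eq_abs])
      _ = ∑' k : ℕ, |P τ k * qz τ ((k:ℤ) - j)| :=
          tsum_congr fun k => by rw [norm_neg, Real.norm_eq_abs]
  rcases le_or_gt 1 τ with h1 | h1
  · -- τ ≥ 1 : AM-GM splitting
    set α : ℝ := (Real.sqrt τ)⁻¹ with hα
    have hα0 : 0 < α := by positivity
    -- shifted q² sum
    have hshift := shift_summable (fun n => (qz τ n)^2)
      (fun n hn => by show (qz τ n)^2 = 0; rw [qz_neg n hn]; norm_num)
      (fun n => sq_nonneg _) (summable_q_sq hτ) j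
    have hsum_shift : ∑' k : ℕ, (qz τ ((k:ℤ) - j))^2 ≤ 7 / (τ * Real.sqrt τ) :=
      hshift.2.trans (tsum_q_sq_le hτ)
    have hterm2 : ∀ k : ℕ, |P τ k * qz τ ((k:ℤ) - j)| ≤
        (1/2) * (α * (P τ k)^2 + α⁻¹ * (qz τ ((k:ℤ) - j))^2) := by
      intro k
      rw [abs_mul, abs_of_nonneg (P_nonneg hτ k)]
      have h2 := sq_nonneg (α * P τ k - |qz τ ((k:ℤ) - j)|)
      have h3 : |qz τ ((k:ℤ) - j)|^2 = (qz τ ((k:ℤ) - j))^2 := sq_abs _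
      have h4 : α⁻¹ * α = 1 := inv_mul_cancel₀ hα0.ne'
      have h5 := abs_nonneg (qz τ ((k:ℤ) - j))
      have h6 := P_nonneg hτ k
      nlinarith [mul_pos hα0 hα0]
    have hsum2 : Summable (fun k : ℕ =>
        (1/2) * (α * (P τ k)^2 + α⁻¹ * (qz τ ((k:ℤ) - j))^2)) := by
      apply Summable.mul_left
      exact ((summable_P_sq hτ).mul_left α).add (hshift.1.mul_left α⁻¹)
    have hle : |Sker τ (j+1) - Sker τ j| ≤
        (1/2) * (α * ∑' k : ℕ, (P τ k)^2 + α⁻¹ * ∑' k : ℕ, (qz τ ((k:ℤ) - j))^2) := by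
      refine hmain.trans ?_
      have := Summable.tsum_le_tsum hterm2 hsabs hsum2
      refine this.trans (le_of_eq ?_)
      rw [tsum_mul_left, Summable.tsum_add ((summable_P_sq hτ).mul_left α) (hshift.1.mul_left α⁻¹),
        tsum_mul_left, tsum_mul_left]
    refine hle.trans ?_
    have hPsq := tsum_P_sq_le hτ
    have hq := hsum_shift
    have hτs : Real.sqrt τ * Real.sqrt τ = τ := Real.mul_self_sqrt hτ.le
    have e1 : α * (7 / Real.sqrt τ) = 7 / τ := by
      rw [hα, ← hτs]; field_simp; rw [Real.sqrt_sq (Real.sqrt_nonneg τ)]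
    have e2 : α⁻¹ * (7 / (τ * Real.sqrt τ)) = 7 / τ := by
      rw [hα, inv_inv, ← hτs]; field_simp
    have hqnn : 0 ≤ ∑' k : ℕ, (qz τ ((k:ℤ) - j))^2 := tsum_nonneg fun k => sq_nonneg _
    have hPnn : 0 ≤ ∑' k : ℕ, (P τ k)^2 := tsum_nonneg fun k => sq_nonneg _
    have b1 : α * ∑' k : ℕ, (P τ k)^2 ≤ 7 / τ := by
      rw [← e1]; exact mul_le_mul_of_nonneg_left hPsq hα0.le
    have b2 : α⁻¹ * ∑' k : ℕ, (qz τ ((k:ℤ) - j))^2 ≤ 7 / τ := by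
      rw [← e2]; exact mul_le_mul_of_nonneg_left hq (by positivity)
    have : (1/2 : ℝ) * (7/τ + 7/τ) = 7/τ := by ring
    have h7 : (7:ℝ)/τ ≤ 14/τ := by
      rw [div_le_div_iff₀ hτ hτ]; nlinarith
    linarith
  · -- τ < 1 : crude bound
    have h2 : ∑' k : ℕ, |P τ k * qz τ ((k:ℤ) - j)| ≤ ∑' k : ℕ, 2 * P τ k :=
      Summable.tsum_le_tsum habs_le hsabs ((summable_P τ).mul_left 2)
    rw [tsum_mul_left, tsum_P hτ, mul_one] at h2
    have : (2:ℝ) ≤ 14 / τ := by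
      rw [le_div_iff₀ hτ]; nlinarith
    linarith


lemma exp_wterm_aux (τ : ℝ) (n k : ℕ) :
    (Real.exp (-τ) * Real.exp (-τ)) * (τ ^ (k + n) / ((n.factorial : ℝ) * (k.factorial : ℝ)))
      = P τ k * P τ n := by
  unfold P
  have f1 : (0:ℝ) < k.factorial := by exact_mod_cast k.factorial_pos
  have f2 : (0:ℝ) < (n.factorial : ℝ) := by exact_mod_cast n.factorial_pos
  rw [pow_add]
  field_simp

lemma exp_wterm {h t : ℝ} (hh : 0 < h) (j : ℤ) (k : ℕ) :
    Real.exp (-2 * t / h ^ 2) * wterm h j t k = P (t / h ^ 2) k * Pz (t / h ^ 2) ((k : ℤ) - j) := by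
  have hexp : Real.exp (-2 * t / h ^ 2) = Real.exp (-(t / h ^ 2)) * Real.exp (-(t / h ^ 2)) := by
    rw [← Real.exp_add]
    congr 1
    field_simp
    ring
  by_cases h1 : j ≤ (k : ℤ)
  · have hPz : Pz (t / h ^ 2) ((k:ℤ) - j) = P (t / h ^ 2) ((k:ℤ) - j).toNat := if_pos (by omega)
    have htn : (2 * (k : ℤ) - j).toNat = k + ((k:ℤ) - j).toNat := by omega
    rw [wterm, if_pos h1, hPz, hexp, htn]
    exact exp_wterm_aux (t / h ^ 2) ((k:ℤ) - j).toNat k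
  · rw [wterm, if_neg h1, mul_zero, Pz, if_neg (by omega), mul_zero]

lemma wker_eq {h t : ℝ} (hh : 0 < h) (j : ℤ) :
    wker h j t = (1 / h) * Sker (t / h ^ 2) j := by
  unfold wker Sker
  rw [mul_assoc, ← tsum_mul_left]
  congr 1
  exact tsum_congr fun k => exp_wterm hh j k

lemma sqrt_tau {h t : ℝ} (hh : 0 < h) (ht : 0 < t) :
    Real.sqrt (t / h ^ 2) = Real.sqrt t / h := by
  rw [Real.sqrt_div ht.le, Real.sqrt_sq hh.le]

lemma wker_nonneg {h t : ℝ} (hh : 0 < h) (ht : 0 < t) (j : ℤ) : 0 ≤ wker h j t := by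
  rw [wker_eq hh]
  have hτ : 0 < t / h ^ 2 := by positivity
  have := Sker_nonneg hτ j
  positivity

lemma wker_le {h t : ℝ} (hh : 0 < h) (ht : 0 < t) (j : ℤ) :
    wker h j t ≤ 7 / Real.sqrt t := by
  rw [wker_eq hh]
  have hτ : 0 < t / h ^ 2 := by positivity
  have h1 := Sker_le hτ j
  rw [sqrt_tau hh ht] at h1
  have hst : 0 < Real.sqrt t := Real.sqrt_pos.mpr ht
  calc (1/h) * Sker (t/h^2) j ≤ (1/h) * (7 / (Real.sqrt t / h)) := by
        apply mul_le_mul_of_nonneg_left h1 (by positivity)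
    _ = 7 / Real.sqrt t := by field_simp
lemma wker_diff {h t : ℝ} (hh : 0 < h) (ht : 0 < t) (j : ℤ) :
    |wker h (j + 1) t - wker h j t| ≤ 14 * h / t := by
  rw [wker_eq hh, wker_eq hh]
  have hτ : 0 < t / h ^ 2 := by positivity
  have h1 := Sker_diff hτ j
  have : (1/h) * Sker (t/h^2) (j+1) - (1/h) * Sker (t/h^2) j
      = (1/h) * (Sker (t/h^2) (j+1) - Sker (t/h^2) j) := by ring
  rw [this, abs_mul, abs_of_nonneg (by positivity : (0:ℝ) ≤ 1/h)]
  calc (1/h) * |Sker (t/h^2) (j+1) - Sker (t/h^2) j| ≤ (1/h) * (14 / (t/h^2)) := by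
        apply mul_le_mul_of_nonneg_left h1 (by positivity)
    _ = 14 * h / t := by field_simp

/-- Main product bound. -/
lemma main_bound {d : ℕ} (hd : 1 ≤ d) {h t : ℝ} (hh : 0 < h) (ht : 0 < t)
    (i : Fin d) (j : Fin d → ℤ) (a : ℤ) (u v : Fin d → ℤ)
    (hu : ∀ k, u k = if k = i then a + 1 else j k)
    (hv : ∀ k, v k = if k = i then a else j k) :
    |(h⁻¹ : ℝ) * (Phiker h u t - Phiker h v t)| ≤
      7 ^ (d - 1) * 14 * t ^ (-(1 / 2 + (d : ℝ) / 2)) := by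
  have hst : 0 < Real.sqrt t := Real.sqrt_pos.mpr ht
  set Pr : ℝ := ∏ k ∈ Finset.univ.erase i, wker h (j k) t with hPr
  have hprod : ∀ w : Fin d → ℤ, (∀ k, k ≠ i → w k = j k) →
      Phiker h w t = wker h (w i) t * Pr := by
    intro w hw
    unfold Phiker
    rw [← Finset.mul_prod_erase Finset.univ _ (Finset.mem_univ i)]
    congr 1
    exact Finset.prod_congr rfl fun k hk => by
      rw [hw k (Finset.ne_of_mem_erase hk)]
  have hu' : Phiker h u t = wker h (a + 1) t * Pr := by
    rw [hprod u fun k hk => by rw [hu k, if_neg hk]]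
    congr 2
    rw [hu i, if_pos rfl]
  have hv' : Phiker h v t = wker h a t * Pr := by
    rw [hprod v fun k hk => by rw [hv k, if_neg hk]]
    congr 2
    rw [hv i, if_pos rfl]
  have hPr_nonneg : 0 ≤ Pr :=
    Finset.prod_nonneg fun k _ => wker_nonneg hh ht (j k)
  have hPr_le : Pr ≤ (7 / Real.sqrt t) ^ (d - 1) := by
    have hcard : (Finset.univ.erase i).card = d - 1 := by
      rw [Finset.card_erase_of_mem (Finset.mem_univ i)]
      simp
    calc Pr ≤ ∏ k ∈ Finset.univ.erase i, (7 / Real.sqrt t) :=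
          Finset.prod_le_prod (fun k _ => wker_nonneg hh ht (j k))
            (fun k _ => wker_le hh ht (j k))
      _ = (7 / Real.sqrt t) ^ (d - 1) := by rw [Finset.prod_const, hcard]
  have habs : |(h⁻¹ : ℝ) * (Phiker h u t - Phiker h v t)|
      = h⁻¹ * |wker h (a+1) t - wker h a t| * Pr := by
    rw [hu', hv']
    rw [show wker h (a+1) t * Pr - wker h a t * Pr = (wker h (a+1) t - wker h a t) * Pr by ring]
    rw [abs_mul, abs_mul, abs_of_nonneg (by positivity : (0:ℝ) ≤ (h⁻¹:ℝ)),
      abs_of_nonneg hPr_nonneg, mul_assoc]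
  rw [habs]
  have hd1 : h⁻¹ * |wker h (a+1) t - wker h a t| ≤ 14 / t := by
    calc h⁻¹ * |wker h (a+1) t - wker h a t| ≤ h⁻¹ * (14 * h / t) :=
          mul_le_mul_of_nonneg_left (wker_diff hh ht a) (by positivity)
      _ = 14 / t := by field_simp
  have hbound : h⁻¹ * |wker h (a+1) t - wker h a t| * Pr
      ≤ (14 / t) * (7 / Real.sqrt t) ^ (d - 1) := by
    apply mul_le_mul hd1 hPr_le hPr_nonneg (by positivity)
  refine hbound.trans (le_of_eq ?_)
  -- now the rpow computation
  have hsqrt : Real.sqrt t = t ^ ((1:ℝ)/2) := Real.sqrt_eq_rpow t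
  have hexp : -(1/2 + (d:ℝ)/2) = (-1) + (-(1/2)) * ((d - 1 : ℕ) : ℝ) := by
    have : ((d - 1 : ℕ) : ℝ) = (d : ℝ) - 1 := by
      have : (1:ℕ) ≤ d := hd
      push_cast [Nat.cast_sub this]
      ring
    rw [this]; ring
  rw [hexp, Real.rpow_add ht, Real.rpow_neg_one]
  have hpow : t ^ ((-(1/2)) * ((d - 1 : ℕ) : ℝ)) = (t ^ (-(1/2) : ℝ)) ^ (d - 1 : ℕ) := by
    rw [← Real.rpow_natCast (t ^ (-(1/2):ℝ)) (d-1), ← Real.rpow_mul ht.le]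
  rw [hpow]
  have hfac : (7 : ℝ) / Real.sqrt t = 7 * t ^ (-(1/2) : ℝ) := by
    rw [Real.rpow_neg ht.le, hsqrt]
    field_simp
  rw [hfac, mul_pow]
  ring


end DHK

/-- The first differences of the `d`-dimensional discrete heat
kernel satisfy `‖D_{σi}Φ^h(t)‖_{L^∞_h} ≤ C t^{−(1/2+d/2)}` with `C = C(d)`
independent of the mesh size (`σ = true` is the forward difference). -/
theorem discrete_heat_kernel_diff_Linfty_bound (d : ℕ) (hd : 1 ≤ d) :
    ∃ C : ℝ, 0 < C ∧
      ∀ h : ℝ, 0 < h → ∀ t : ℝ, 0 < t → ∀ i : Fin d, ∀ σ : Bool, ∀ j : Fin d → ℤ,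
        |(if σ then fdiff h i (fun j' => Phiker h j' t)
            else bdiff h i (fun j' => Phiker h j' t)) j| ≤
          C * t ^ (-(1 / 2 + (d : ℝ) / 2)) := by
  refine ⟨7 ^ (d - 1) * 14, by positivity, ?_⟩
  intro h hh t ht i σ j
  cases σ with
  | true =>
    simp only [if_true, fdiff, smul_eq_mul]
    apply DHK.main_bound hd hh ht i j (j i) (j + gunit i) j
    · intro k
      by_cases hk : k = i
      · subst hk; simp [gunit]
      · simp [gunit, hk]
    · intro k
      by_cases hk : k = i
      · subst hk; simp
      · simp [hk]
  | false =>
    simp only [Bool.false_eq_true, if_false, bdiff, smul_eq_mul]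
    apply DHK.main_bound hd hh ht i j (j i - 1) j (j - gunit i)
    · intro k
      by_cases hk : k = i
      · subst hk; simp
      · simp [hk]
    · intro k
      by_cases hk : k = i
      · subst hk; simp [gunit]
      · simp [gunit, hk]
end
end
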